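/- Let π = a + b·i ∈ ℤ[i] with 0 < a < b, gcd(a,b) = 1, and p = a² + b² a prime with p ≡ 1 (mod 4), and let 𝔽 = ℤ[i]/(π). Then for all positive integers k, n₁, n₂ with n₁ ≥ k and n₂ ≥ k, one has d_π(n₁ + n₂, k) ≥ d_π(n₁, k) + d_π(n₂, k). -/

import Mathlib

open scoped Classical

noncomputable section

/-- The quotient ring `ℤ[i]/(π)`. -/
abbrev GQuot (pi : GaussianInt) : Type := GaussianInt ⧸ Ideal.span {pi}

/-- The quotient map `ℤ[i] → ℤ[i]/(π)`. -/
def gmk (pi : GaussianInt) : GaussianInt →+* GQuot pi := Ideal.Quotient.mk (Ideal.span {pi})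

/-- Mannheim weight of an element of `ℤ[i]/(π)`:
the minimum of `|x| + |y|` over representatives `x + y·i`. -/
def mWt (pi : GaussianInt) (α : GQuot pi) : ℕ :=
  sInf { w : ℕ | ∃ z : GaussianInt, gmk pi z = α ∧ z.re.natAbs + z.im.natAbs = w }

/-- Mannheim weight of a vector: the sum of the Mannheim weights of its coordinates. -/
def mWtVec (pi : GaussianInt) {n : ℕ} (v : Fin n → GQuot pi) : ℕ := ∑ i, mWt pi (v i)

/-- Hamming weight of a vector: the number of nonzero coordinates. -/
def hWtVec {n : ℕ} {F : Type*} [Zero F] (v : Fin n → F) : ℕ :=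
  Set.ncard { i : Fin n | v i ≠ 0 }

/-- Minimum Mannheim distance of a linear code (minimum Mannheim weight of a
nonzero codeword). -/
def dPiCode (pi : GaussianInt) {n : ℕ} (C : Submodule (GQuot pi) (Fin n → GQuot pi)) : ℕ :=
  sInf { w : ℕ | ∃ c ∈ C, c ≠ 0 ∧ mWtVec pi c = w }

/-- Minimum Hamming distance of a linear code. -/
def dHCode (pi : GaussianInt) {n : ℕ} (C : Submodule (GQuot pi) (Fin n → GQuot pi)) : ℕ :=
  sInf { w : ℕ | ∃ c ∈ C, c ≠ 0 ∧ hWtVec c = w }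

/-- `dPiMax pi n k`: the maximum minimum Mannheim distance over all `[n,k]` codes. -/
def dPiMax (pi : GaussianInt) (n k : ℕ) : ℕ :=
  sSup { d : ℕ | ∃ C : Submodule (GQuot pi) (Fin n → GQuot pi),
    Module.finrank (GQuot pi) C = k ∧ dPiCode pi C = d }

/-- `dHMax pi n k`: the maximum minimum Hamming distance over all `[n,k]` codes. -/
def dHMax (pi : GaussianInt) (n k : ℕ) : ℕ :=
  sSup { d : ℕ | ∃ C : Submodule (GQuot pi) (Fin n → GQuot pi),
    Module.finrank (GQuot pi) C = k ∧ dHCode pi C = d }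

namespace Stmt5Aux



/-- `ℤ`-linear equivalence between `ℤ[i]` and `ℤ × ℤ`. -/
def gaussEquiv : GaussianInt ≃ₗ[ℤ] ℤ × ℤ where
  toFun z := (z.re, z.im)
  invFun p := ⟨p.1, p.2⟩
  map_add' x y := by simp [Zsqrtd.ext_iff]
  map_smul' n z := by
    simp only [zsmul_eq_mul, RingHom.id_apply]
    have h1 := Zsqrtd.re_smul n z
    have h2 := Zsqrtd.im_smul n z
    simp [Prod.ext_iff, h1, h2]
  left_inv z := rfl
  right_inv p := rfl

instance : Module.Free ℤ GaussianInt := Module.Free.of_equiv gaussEquiv.symm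
instance : Module.Finite ℤ GaussianInt := Module.Finite.equiv gaussEquiv.symm

/-- Existence of a subspace of `F^n` of dimension `k ≤ n`. -/
lemma exists_code {F : Type*} [Field F] {n k : ℕ} (hk : 1 ≤ k) (hn : k ≤ n) :
    ∃ C : Submodule F (Fin n → F), Module.finrank F C = k := by
  let gfun : Fin n → Fin k := fun i => if h : (i : ℕ) < k then ⟨i, h⟩ else ⟨0, hk⟩
  have hsurj : Function.Surjective gfun := by
    intro j
    refine ⟨⟨j, lt_of_lt_of_le j.2 hn⟩, ?_⟩
    simp [gfun, j.2]
  refine ⟨LinearMap.range (LinearMap.funLeft F F gfun), ?_⟩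
  rw [LinearMap.finrank_range_of_inj (LinearMap.funLeft_injective_of_surjective F F gfun hsurj)]
  exact Module.finrank_fin_fun F

lemma exists_ne_zero {F : Type*} [Field F] {n k : ℕ} (hk : 1 ≤ k)
    (C : Submodule F (Fin n → F)) (h : Module.finrank F C = k) :
    ∃ c ∈ C, c ≠ 0 := by
  have hCb : C ≠ ⊥ := by
    intro hb
    rw [hb, finrank_bot] at h
    omega
  exact Submodule.exists_mem_ne_zero_of_ne_bot hCb

/-- The key concatenation construction. -/
lemma exists_concat_code {F : Type*} [Field F] {n₁ n₂ k : ℕ}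
    (C₁ : Submodule F (Fin n₁ → F)) (C₂ : Submodule F (Fin n₂ → F))
    (h1 : Module.finrank F C₁ = k) (h2 : Module.finrank F C₂ = k) (w : F → ℕ) :
    ∃ C : Submodule F (Fin (n₁ + n₂) → F), Module.finrank F C = k ∧
      ∀ c ∈ C, c ≠ 0 → ∃ c₁ ∈ C₁, ∃ c₂ ∈ C₂, c₁ ≠ 0 ∧ c₂ ≠ 0 ∧
        ∑ i, w (c i) = (∑ i, w (c₁ i)) + ∑ i, w (c₂ i) := by
  let e : C₁ ≃ₗ[F] C₂ := LinearEquiv.ofFinrankEq _ _ (h1.trans h2.symm)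
  let E : ((Fin n₁ → F) × (Fin n₂ → F)) ≃ₗ[F] (Fin (n₁ + n₂) → F) :=
    (LinearEquiv.sumArrowLequivProdArrow (Fin n₁) (Fin n₂) F F).symm.trans
      (LinearEquiv.funCongrLeft F F finSumFinEquiv).symm
  have hE : ∀ (v₁ : Fin n₁ → F) (v₂ : Fin n₂ → F) (i : Fin (n₁ + n₂)),
      E (v₁, v₂) i = Sum.elim v₁ v₂ (finSumFinEquiv.symm i) := by
    intro v₁ v₂ i
    rfl
  have hsum : ∀ (v₁ : Fin n₁ → F) (v₂ : Fin n₂ → F),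
      ∑ i, w (E (v₁, v₂) i) = (∑ i, w (v₁ i)) + ∑ i, w (v₂ i) := by
    intro v₁ v₂
    have := Fintype.sum_equiv finSumFinEquiv
      (fun s => w (Sum.elim v₁ v₂ s)) (fun i => w (E (v₁, v₂) i))
      (by intro s; simp only [hE]; simp)
    rw [← this, Fintype.sum_sum_type]
    simp
  let g : C₁ →ₗ[F] (Fin n₁ → F) × (Fin n₂ → F) :=
    (C₁.subtype).prod (C₂.subtype ∘ₗ (e : C₁ →ₗ[F] C₂))
  have hginj : Function.Injective g := by
    intro x y hxy
    have := congrArg Prod.fst hxy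
    exact Subtype.ext this
  refine ⟨Submodule.map (E.toLinearMap) (LinearMap.range g), ?_, ?_⟩
  · rw [LinearEquiv.finrank_map_eq, LinearMap.finrank_range_of_inj hginj, h1]
  · rintro c hc hc0
    obtain ⟨y, hy, rfl⟩ := hc
    obtain ⟨x, rfl⟩ := hy
    have hx : x ≠ 0 := by
      rintro rfl
      simp at hc0
    refine ⟨(x : Fin n₁ → F), x.2, ((e x : C₂) : Fin n₂ → F), (e x).2, ?_, ?_, ?_⟩
    · simpa using hx
    · simp only [ne_eq, Submodule.coe_eq_zero, LinearEquiv.map_eq_zero_iff]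
      exact hx
    · exact hsum _ _

end Stmt5Aux

section Bridge

/-- Bridge lemma: nonzero codeword exists (ambient instances). -/
lemma bridge_exists_ne_zero (pi : GaussianInt)
    (hmax : (Ideal.span ({pi} : Set GaussianInt)).IsMaximal)
    {n k : ℕ} (hk : 1 ≤ k) (C : Submodule (GQuot pi) (Fin n → GQuot pi))
    (h : Module.finrank (GQuot pi) C = k) : ∃ c ∈ C, c ≠ 0 := by
  letI := @Ideal.Quotient.field GaussianInt _ (Ideal.span {pi}) hmax
  exact Stmt5Aux.exists_ne_zero hk C h

/-- Bridge lemma: a code of dimension `k` exists (ambient instances). -/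
lemma bridge_exists_code (pi : GaussianInt)
    (hmax : (Ideal.span ({pi} : Set GaussianInt)).IsMaximal)
    {n k : ℕ} (hk : 1 ≤ k) (hn : k ≤ n) :
    ∃ C : Submodule (GQuot pi) (Fin n → GQuot pi), Module.finrank (GQuot pi) C = k := by
  letI := @Ideal.Quotient.field GaussianInt _ (Ideal.span {pi}) hmax
  exact Stmt5Aux.exists_code hk hn

/-- Bridge lemma: the concatenation construction (ambient instances). -/
lemma bridge_concat (pi : GaussianInt)
    (hmax : (Ideal.span ({pi} : Set GaussianInt)).IsMaximal)
    {n₁ n₂ k : ℕ}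
    (C₁ : Submodule (GQuot pi) (Fin n₁ → GQuot pi))
    (C₂ : Submodule (GQuot pi) (Fin n₂ → GQuot pi))
    (h1 : Module.finrank (GQuot pi) C₁ = k) (h2 : Module.finrank (GQuot pi) C₂ = k) :
    ∃ C : Submodule (GQuot pi) (Fin (n₁ + n₂) → GQuot pi), Module.finrank (GQuot pi) C = k ∧
      ∀ c ∈ C, c ≠ 0 → ∃ c₁ ∈ C₁, ∃ c₂ ∈ C₂, c₁ ≠ 0 ∧ c₂ ≠ 0 ∧
        mWtVec pi c = mWtVec pi c₁ + mWtVec pi c₂ := by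
  letI := @Ideal.Quotient.field GaussianInt _ (Ideal.span {pi}) hmax
  exact Stmt5Aux.exists_concat_code C₁ C₂ h1 h2 (mWt pi)

/-- Bridge lemma: the quotient is finite. -/
lemma bridge_fintype (pi : GaussianInt) (hne : pi ≠ 0) : Nonempty (Fintype (GQuot pi)) :=
  ⟨@Fintype.ofFinite _ (Ideal.finiteQuotientOfFreeOfNeBot _ (by simpa [Ideal.span_singleton_eq_bot] using hne))⟩

end Bridge

set_option maxHeartbeats 1600000 in
set_option synthInstance.maxHeartbeats 800000 in
/-- `d_π(n₁ + n₂, k) ≥ d_π(n₁, k) + d_π(n₂, k)`. -/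
theorem stmt5 (a b : ℕ) (ha : 0 < a) (hab : a < b) (hgcd : Nat.gcd a b = 1)
    (hp : Nat.Prime (a ^ 2 + b ^ 2)) (hmod : (a ^ 2 + b ^ 2) % 4 = 1)
    (pi : GaussianInt) (hpi : pi = (⟨(a : ℤ), (b : ℤ)⟩ : GaussianInt))
    (k n₁ n₂ : ℕ) (hk : 1 ≤ k) (hn₁ : k ≤ n₁) (hn₂ : k ≤ n₂) :
    dPiMax pi n₁ k + dPiMax pi n₂ k ≤ dPiMax pi (n₁ + n₂) k := by
  classical
  -- basic arithmetic facts about pi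
  have hnat : pi.norm.natAbs = a ^ 2 + b ^ 2 := by
    have hnorm : pi.norm = (a : ℤ) * a + (b : ℤ) * b := by
      rw [hpi, Zsqrtd.norm_def]; ring
    have hcast : ((a ^ 2 + b ^ 2 : ℕ) : ℤ) = (a : ℤ) * a + (b : ℤ) * b := by
      push_cast; ring
    rw [hnorm, ← hcast, Int.natAbs_natCast]
  have hne : pi ≠ 0 := by
    intro h
    rw [h] at hnat
    have ha2 : 0 < a ^ 2 := pow_pos ha 2
    simp [Zsqrtd.norm] at hnat
    omega
  have hirr : Irreducible pi := by
    constructor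
    · intro hu
      have h1 := Zsqrtd.norm_eq_one_iff.mpr hu
      rw [hnat] at h1
      have := hp.one_lt
      omega
    · intro x y hxy
      have hxyn : x.norm.natAbs * y.norm.natAbs = a ^ 2 + b ^ 2 := by
        rw [← Int.natAbs_mul, ← Zsqrtd.norm_mul, ← hxy, hnat]
      rcases hp.eq_one_or_self_of_dvd x.norm.natAbs ⟨y.norm.natAbs, hxyn.symm⟩ with h1 | hP
      · exact Or.inl (Zsqrtd.norm_eq_one_iff.mp h1)
      · refine Or.inr (Zsqrtd.norm_eq_one_iff.mp ?_)
        have hp0 : 0 < a ^ 2 + b ^ 2 := hp.pos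
        rw [hP] at hxyn
        exact Nat.eq_of_mul_eq_mul_left hp0 (hxyn.trans (mul_one _).symm)
  have hmax : (Ideal.span ({pi} : Set GaussianInt)).IsMaximal :=
    PrincipalIdealRing.isMaximal_of_irreducible hirr
  obtain ⟨hfin⟩ := bridge_fintype pi hne
  -- a uniform bound on Mannheim weights
  set B : ℕ := (@Finset.univ (GQuot pi) hfin).sup (mWt pi) with hBdef
  have hwt : ∀ α : GQuot pi, mWt pi α ≤ B :=
    fun α => Finset.le_sup (@Finset.mem_univ _ hfin α)
  have hvec : ∀ (n : ℕ) (v : Fin n → GQuot pi), mWtVec pi v ≤ n * B := by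
    intro n v
    calc mWtVec pi v = ∑ i, mWt pi (v i) := rfl
      _ ≤ ∑ _i : Fin n, B := Finset.sum_le_sum (fun i _ => hwt (v i))
      _ = n * B := by simp [Finset.sum_const, Finset.card_univ, Nat.smul_one_eq_cast]
  have hbdd : ∀ n : ℕ, BddAbove { d : ℕ | ∃ C : Submodule (GQuot pi) (Fin n → GQuot pi),
      Module.finrank (GQuot pi) C = k ∧ dPiCode pi C = d } := by
    intro n
    refine ⟨n * B, ?_⟩
    rintro d ⟨C, hCk, rfl⟩
    obtain ⟨c, hc, hc0⟩ := bridge_exists_ne_zero pi hmax hk C hCk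
    exact le_trans (Nat.sInf_le ⟨c, hc, hc0, rfl⟩) (hvec n c)
  have hne1 : { d : ℕ | ∃ C : Submodule (GQuot pi) (Fin n₁ → GQuot pi),
      Module.finrank (GQuot pi) C = k ∧ dPiCode pi C = d }.Nonempty := by
    obtain ⟨C, hC⟩ := bridge_exists_code pi hmax hk hn₁
    exact ⟨dPiCode pi C, C, hC, rfl⟩
  have hne2 : { d : ℕ | ∃ C : Submodule (GQuot pi) (Fin n₂ → GQuot pi),
      Module.finrank (GQuot pi) C = k ∧ dPiCode pi C = d }.Nonempty := by
    obtain ⟨C, hC⟩ := bridge_exists_code pi hmax hk hn₂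
    exact ⟨dPiCode pi C, C, hC, rfl⟩
  obtain ⟨C₁, hC₁k, hC₁d⟩ := Nat.sSup_mem hne1 (hbdd n₁)
  obtain ⟨C₂, hC₂k, hC₂d⟩ := Nat.sSup_mem hne2 (hbdd n₂)
  obtain ⟨C, hCk, hCprop⟩ :=
    bridge_concat pi hmax C₁ C₂ hC₁k hC₂k
  obtain ⟨c0, hc0C, hc00⟩ := bridge_exists_ne_zero pi hmax hk C hCk
  have hd : dPiMax pi n₁ k + dPiMax pi n₂ k ≤ dPiCode pi C := by
    show dPiMax pi n₁ k + dPiMax pi n₂ k ≤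
      sInf { w : ℕ | ∃ c ∈ C, c ≠ 0 ∧ mWtVec pi c = w }
    refine le_csInf ⟨mWtVec pi c0, c0, hc0C, hc00, rfl⟩ ?_
    rintro w ⟨c, hc, hcne, rfl⟩
    obtain ⟨c₁, h1, c₂, h2, h1n, h2n, hw⟩ := hCprop c hc hcne
    have e1 : dPiCode pi C₁ ≤ mWtVec pi c₁ := Nat.sInf_le ⟨c₁, h1, h1n, rfl⟩
    have e2 : dPiCode pi C₂ ≤ mWtVec pi c₂ := Nat.sInf_le ⟨c₂, h2, h2n, rfl⟩
    have hw' := hw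
    have g1 : dPiMax pi n₁ k = dPiCode pi C₁ := hC₁d.symm
    have g2 : dPiMax pi n₂ k = dPiCode pi C₂ := hC₂d.symm
    omega
  exact le_trans hd (le_csSup (hbdd (n₁ + n₂)) ⟨C, hCk, rfl⟩)
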